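/- The two expressions for the multipartite work deficit coincide: min over non-adaptive local projective measurement protocols Λ of H_Λ(Y_N) - S(ρ) equals min over classically correlated states σ of the quantum relative entropy S(ρ‖σ), where classically correlated states are those of the form σ = ∑_{Y_N} q(Y_N) Π_{y₁} ⊗ ⋯ ⊗ Π_{y_N} with orthogonal rank-one projectors {Π_{y_n}} for each party. -/

import Mathlib

noncomputable section
open scoped BigOperators ComplexOrder

/-- Shannon entropy (natural logarithm), with the convention `0 * log 0 = 0`. -/
def shannon {α : Type*} [Fintype α] (p : α → ℝ) : ℝ := -∑ y, p y * Real.log (p y)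

/-- `B` lists the members of an orthonormal basis of `ℂ^d` (the rows `B a` are the basis
vectors). -/
def ONB {d : ℕ} (B : Fin d → Fin d → ℂ) : Prop :=
  ∀ a b, (∑ i, (starRingEnd ℂ) (B a i) * B b i) = if a = b then 1 else 0

/-- Von Neumann entropy (natural logarithm) of a Hermitian matrix, defined through its
eigenvalues; junk value `0` on non-Hermitian input. -/
def vN {n : Type*} [Fintype n] [DecidableEq n] (ρ : Matrix n n ℂ) : ℝ :=
  if h : ρ.IsHermitian then -∑ i, h.eigenvalues i * Real.log (h.eigenvalues i) else 0

/-- `ρ` is a density matrix. -/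
def IsDensity {n : Type*} [Fintype n] [DecidableEq n] (ρ : Matrix n n ℂ) : Prop :=
  ρ.PosSemidef ∧ ρ.trace = 1

/-- Born-rule joint outcome distribution of the non-adaptive local rank-one projective
measurement with per-party orthonormal bases `B n`, applied to the `N`-party state `ρ`
(each party being `d`-dimensional): `P(Y) = Tr[(Π_{y₁} ⊗ ⋯ ⊗ Π_{y_N}) ρ]`. -/
def locProb {N d : ℕ} (ρ : Matrix (Fin N → Fin d) (Fin N → Fin d) ℂ)
    (B : Fin N → Fin d → Fin d → ℂ) (y : Fin N → Fin d) : ℝ :=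
  (∑ s, ∑ t, (∏ n, B n (y n) (s n) * (starRingEnd ℂ) (B n (y n) (t n))) * ρ t s).re

/-- The multipartite (zero-way) work deficit
`Δ(ρ) = min_{Λ ∈ M_N} H_Λ(Y_N) − S(ρ)`. -/
def deficit {N d : ℕ} (ρ : Matrix (Fin N → Fin d) (Fin N → Fin d) ℂ) : ℝ :=
  sInf {h : ℝ | ∃ B : Fin N → Fin d → Fin d → ℂ,
    (∀ n, ONB (B n)) ∧ h = shannon (locProb ρ B)} - vN ρ
/-- Matrix logarithm of a Hermitian matrix through its spectral decomposition, with the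
convention `log 0 = 0` on the kernel; junk value `0` on non-Hermitian input. -/
def mlog {n : Type*} [Fintype n] [DecidableEq n] (A : Matrix n n ℂ) : Matrix n n ℂ :=
  if h : A.IsHermitian then
    (h.eigenvectorUnitary : Matrix n n ℂ) *
      Matrix.diagonal (fun i => Complex.ofReal (Real.log (h.eigenvalues i))) *
      (star (h.eigenvectorUnitary : Matrix n n ℂ))
  else 0

/-- Quantum relative entropy `S(ρ‖σ) = Tr[ρ (ln ρ − ln σ)]` (natural logarithm). -/
def relEnt {n : Type*} [Fintype n] [DecidableEq n] (ρ σ : Matrix n n ℂ) : ℝ :=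
  ((ρ * (mlog ρ - mlog σ)).trace).re

/-- `σ` is a (full-support) classically correlated state of the `N`-party system:
`σ = ∑_{Y_N} q(Y_N) Π_{y₁} ⊗ ⋯ ⊗ Π_{y_N}` for some per-party orthonormal bases and a
probability distribution `q`. -/
def ClassCorr {N d : ℕ} (σ : Matrix (Fin N → Fin d) (Fin N → Fin d) ℂ) : Prop :=
  ∃ (B : Fin N → Fin d → Fin d → ℂ) (q : (Fin N → Fin d) → ℝ),
    (∀ n, ONB (B n)) ∧ (∀ Y, 0 < q Y) ∧ (∑ Y, q Y = 1) ∧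
    ∀ s t, σ s t = ∑ Y, (Complex.ofReal (q Y)) *
      (∏ n, B n (Y n) (s n)) * (∏ n, (starRingEnd ℂ) (B n (Y n) (t n)))


open Matrix Polynomial

open Matrix Polynomial
open scoped ComplexOrder

variable {n : Type*} [Fintype n] [DecidableEq n]

private lemma uconj_pow {U : Matrix n n ℂ} (h1 : star U * U = 1) (h2 : U * star U = 1)
    (D : Matrix n n ℂ) (k : ℕ) :
    (U * D * star U) ^ k = U * D ^ k * star U := by
  induction k with
  | zero => simpa using h2.symm
  | succ k ih =>
    have key : ∀ X : Matrix n n ℂ, star U * (U * X) = X := fun X => by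
      rw [← Matrix.mul_assoc, h1, Matrix.one_mul]
    rw [pow_succ, ih, pow_succ]
    simp only [Matrix.mul_assoc, key]

private lemma aeval_conj {U : Matrix n n ℂ} (h1 : star U * U = 1) (h2 : U * star U = 1)
    (v : n → ℂ) (p : Polynomial ℂ) :
    aeval (U * Matrix.diagonal v * star U) p
      = U * Matrix.diagonal (fun i => p.eval (v i)) * star U := by
  rw [aeval_eq_sum_range]
  have : ∀ i ∈ Finset.range (p.natDegree + 1),
      p.coeff i • (U * Matrix.diagonal v * star U) ^ i
        = U * (Matrix.diagonal fun j => p.coeff i * v j ^ i) * star U := by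
    intro i _
    rw [uconj_pow h1 h2, Matrix.diagonal_pow, ← smul_mul_assoc, ← mul_smul_comm,
      ← Matrix.diagonal_smul]
    congr 2
  rw [Finset.sum_congr rfl this]
  have hd : ∀ (s : Finset ℕ) (f : ℕ → n → ℂ),
      ∑ i ∈ s, U * Matrix.diagonal (f i) * star U
        = U * Matrix.diagonal (fun j => ∑ i ∈ s, f i j) * star U := by
    intro s f
    rw [← Finset.sum_mul, ← Finset.mul_sum]
    congr 2
    ext a b
    by_cases hab : a = b <;> simp [Matrix.sum_apply, Matrix.diagonal_apply, hab]
  rw [hd]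
  have he : (fun j => ∑ i ∈ Finset.range (p.natDegree + 1), p.coeff i * v j ^ i)
      = fun j => p.eval (v j) := funext fun j => (Polynomial.eval_eq_sum_range (p := p) (v j)).symm
  rw [he]

private lemma eig_mem {U : Matrix n n ℂ} (h1 : star U * U = 1) (h2 : U * star U = 1)
    (r : n → ℝ) (hA : (U * Matrix.diagonal (fun i => (r i : ℂ)) * star U).IsHermitian) (j : n) :
    ∃ i, hA.eigenvalues j = r i := by
  set A := U * Matrix.diagonal (fun i => (r i : ℂ)) * star U with hAdef
  set v : n → ℂ := ⇑(hA.eigenvectorBasis j) with hv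
  have hvne : v ≠ 0 := fun h => hA.eigenvectorBasis.orthonormal.ne_zero j
    (by ext i; simpa [hv] using congrFun h i)
  have hmv : A *ᵥ v = (hA.eigenvalues j : ℂ) • v := by
    have := hA.mulVec_eigenvectorBasis j
    rw [show A *ᵥ v = A *ᵥ ⇑(hA.eigenvectorBasis j) from rfl, this]
    funext i
    rw [Pi.smul_apply, Pi.smul_apply, Complex.real_smul, smul_eq_mul]
  set w : n → ℂ := star U *ᵥ v with hw
  have hwne : w ≠ 0 := by
    intro h
    apply hvne
    have : U *ᵥ w = v := by
      rw [hw, Matrix.mulVec_mulVec, h2, Matrix.one_mulVec]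
    rw [← this, h, Matrix.mulVec_zero]
  have hDw : Matrix.diagonal (fun i => (r i : ℂ)) *ᵥ w = (hA.eigenvalues j : ℂ) • w := by
    have hsA : star U * A = Matrix.diagonal (fun i => (r i : ℂ)) * star U := by
      rw [hAdef, ← Matrix.mul_assoc, ← Matrix.mul_assoc, h1, Matrix.one_mul]
    calc Matrix.diagonal (fun i => (r i : ℂ)) *ᵥ w
        = (Matrix.diagonal (fun i => (r i : ℂ)) * star U) *ᵥ v := by
          rw [hw, Matrix.mulVec_mulVec]
      _ = (star U * A) *ᵥ v := by rw [hsA]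
      _ = star U *ᵥ (A *ᵥ v) := by rw [← Matrix.mulVec_mulVec]
      _ = (hA.eigenvalues j : ℂ) • w := by rw [hmv, Matrix.mulVec_smul, hw]
  obtain ⟨i, hi⟩ := Function.ne_iff.mp hwne
  refine ⟨i, ?_⟩
  have := congrFun hDw i
  rw [Matrix.mulVec_diagonal] at this
  simp only [Pi.smul_apply, smul_eq_mul] at this
  have h3 : (r i : ℂ) = (hA.eigenvalues j : ℂ) := mul_right_cancel₀ hi this
  exact_mod_cast h3.symm

private lemma mlog_conj {U : Matrix n n ℂ} (h1 : star U * U = 1) (h2 : U * star U = 1)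
    (r : n → ℝ) :
    mlog (U * Matrix.diagonal (fun i => (r i : ℂ)) * star U)
      = U * Matrix.diagonal (fun i => ((Real.log (r i) : ℝ) : ℂ)) * star U := by
  set A := U * Matrix.diagonal (fun i => (r i : ℂ)) * star U with hAdef
  have hd : (Matrix.diagonal (fun i => (r i : ℂ))).IsHermitian := by
    rw [Matrix.IsHermitian, Matrix.diagonal_conjTranspose,
      show (star fun i => ((r i : ℝ) : ℂ)) = (fun i => ((r i : ℝ) : ℂ)) from
        funext fun i => Complex.conj_ofReal _]
  have hA : A.IsHermitian := by
    rw [hAdef, Matrix.star_eq_conjTranspose]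
    exact Matrix.isHermitian_mul_mul_conjTranspose U hd
  -- interpolating polynomial
  set s : Finset ℝ := Finset.image r Finset.univ with hs
  set p : Polynomial ℝ := Lagrange.interpolate s id Real.log with hp
  have hinj : Set.InjOn (id : ℝ → ℝ) s := Function.injective_id.injOn
  have hpeval : ∀ x ∈ s, p.eval x = Real.log x := fun x hx => by
    simpa [hp] using Lagrange.eval_interpolate_at_node Real.log hinj hx
  set pC : Polynomial ℂ := p.map (algebraMap ℝ ℂ) with hpC
  have hpCeval : ∀ x : ℝ, pC.eval ((x : ℝ) : ℂ) = Complex.ofReal (p.eval x) := fun x => by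
    rw [hpC, show ((x : ℝ) : ℂ) = algebraMap ℝ ℂ x from rfl, Polynomial.eval_map,
      Polynomial.eval₂_at_apply]
    rfl
  -- two evaluations of aeval A pC
  have hW1 : star (hA.eigenvectorUnitary : Matrix n n ℂ) * (hA.eigenvectorUnitary : Matrix n n ℂ) = 1 :=
    Unitary.coe_star_mul_self hA.eigenvectorUnitary
  have hW2 : (hA.eigenvectorUnitary : Matrix n n ℂ) * star (hA.eigenvectorUnitary : Matrix n n ℂ) = 1 :=
    Unitary.coe_mul_star_self hA.eigenvectorUnitary
  have e1 : Polynomial.aeval A pC = U * Matrix.diagonal (fun i => ((Real.log (r i) : ℝ) : ℂ)) * star U := by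
    rw [hAdef, aeval_conj h1 h2,
      show (fun i => pC.eval ((r i : ℂ))) = (fun i => ((Real.log (r i) : ℝ) : ℂ)) from
        funext fun i => by
          rw [hpCeval, hpeval (r i) (Finset.mem_image_of_mem r (Finset.mem_univ i))]]
  have e2 : Polynomial.aeval A pC = mlog A := by
    conv_lhs => rw [hA.spectral_theorem]
    rw [Unitary.conjStarAlgAut_apply]
    rw [show (Matrix.diagonal (RCLike.ofReal ∘ hA.eigenvalues) : Matrix n n ℂ)
        = Matrix.diagonal (fun i => ((hA.eigenvalues i : ℝ) : ℂ)) from rfl]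
    rw [aeval_conj hW1 hW2]
    rw [mlog, dif_pos hA,
      show (fun j => pC.eval ((hA.eigenvalues j : ℂ)))
          = (fun j => Complex.ofReal (Real.log (hA.eigenvalues j))) from
        funext fun j => by
          obtain ⟨i, hi⟩ := eig_mem h1 h2 r hA j
          rw [hpCeval, hpeval (hA.eigenvalues j)
            (by rw [hi]; exact Finset.mem_image_of_mem r (Finset.mem_univ i))]]
  rw [← e2, e1]

private lemma trace_conj_diag {U M : Matrix n n ℂ} (h1 : star U * U = 1) (h2 : U * star U = 1)
    (ℓ : n → ℂ) :
    (M * (U * Matrix.diagonal ℓ * star U)).trace = ∑ j, (star U * M * U) j j * ℓ j := by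
  have hM : M = U * (star U * M * U) * star U := by
    rw [← Matrix.mul_assoc, ← Matrix.mul_assoc, h2, Matrix.one_mul, Matrix.mul_assoc, h2,
      Matrix.mul_one]
  set A := star U * M * U with hAdef
  have step : M * (U * Matrix.diagonal ℓ * star U) = U * (A * Matrix.diagonal ℓ) * star U := by
    conv_lhs => rw [hM]
    have key : ∀ X : Matrix n n ℂ, star U * (U * X) = X := fun X => by
      rw [← Matrix.mul_assoc, h1, Matrix.one_mul]
    simp only [Matrix.mul_assoc, key]
  rw [step, Matrix.trace_mul_cycle, ← Matrix.mul_assoc, h1, Matrix.one_mul]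
  rw [Matrix.trace]
  congr 1
  funext j
  rw [Matrix.diag_apply, Matrix.mul_diagonal]

variable {N d : ℕ}

/-- The unitary whose columns are the product basis vectors. -/
def PU (B : Fin N → Fin d → Fin d → ℂ) : Matrix (Fin N → Fin d) (Fin N → Fin d) ℂ :=
  Matrix.of fun s Y => ∏ n, B n (Y n) (s n)

lemma sum_pi_prod (f : Fin N → Fin d → ℂ) :
    ∑ s : Fin N → Fin d, ∏ n, f n (s n) = ∏ n, ∑ i, f n i := by
  rw [← Fintype.piFinset_univ, Finset.sum_prod_piFinset]

lemma PU_star_mul {B : Fin N → Fin d → Fin d → ℂ} (hB : ∀ n, ONB (B n)) :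
    star (PU B) * PU B = 1 := by
  ext Y Y'
  rw [Matrix.mul_apply]
  have h1 : ∀ s, (star (PU B)) Y s * (PU B) s Y'
      = ∏ n, (starRingEnd ℂ) (B n (Y n) (s n)) * B n (Y' n) (s n) := by
    intro s
    rw [Matrix.star_apply, show (PU B) s Y = ∏ n, B n (Y n) (s n) from rfl,
      show (PU B) s Y' = ∏ n, B n (Y' n) (s n) from rfl,
      show star (∏ n, B n (Y n) (s n)) = (starRingEnd ℂ) (∏ n, B n (Y n) (s n)) from rfl,
      map_prod, ← Finset.prod_mul_distrib]
  rw [Finset.sum_congr rfl fun s _ => h1 s,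
    sum_pi_prod (fun n i => (starRingEnd ℂ) (B n (Y n) i) * B n (Y' n) i),
    Finset.prod_congr rfl fun n _ => hB n (Y n) (Y' n)]
  by_cases h : Y = Y'
  · subst h; simp [Matrix.one_apply]
  · obtain ⟨n, hn⟩ := Function.ne_iff.mp h
    rw [Finset.prod_eq_zero (Finset.mem_univ n) (if_neg hn : (if Y n = Y' n then (1:ℂ) else 0) = 0), Matrix.one_apply_ne h]

lemma PU_mul_star {B : Fin N → Fin d → Fin d → ℂ} (hB : ∀ n, ONB (B n)) :
    PU B * star (PU B) = 1 :=
  mul_eq_one_comm.mp (PU_star_mul hB)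

lemma locProb_eq {ρ : Matrix (Fin N → Fin d) (Fin N → Fin d) ℂ}
    (B : Fin N → Fin d → Fin d → ℂ) (Y : Fin N → Fin d) :
    locProb ρ B Y = ((star (PU B) * ρ * PU B) Y Y).re := by
  rw [locProb]
  congr 1
  rw [Matrix.mul_apply]
  have h2 : ∀ t, (star (PU B) * ρ) Y t * (PU B) t Y
      = ∑ s, (starRingEnd ℂ) ((PU B) s Y) * ρ s t * (PU B) t Y := by
    intro t
    rw [Matrix.mul_apply, Finset.sum_mul]
    exact Finset.sum_congr rfl fun s _ => by rw [Matrix.star_apply]; rfl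
  rw [Finset.sum_congr rfl fun t _ => h2 t]
  refine Finset.sum_congr rfl fun s _ => Finset.sum_congr rfl fun t _ => ?_
  rw [show (∏ n, B n (Y n) (s n) * (starRingEnd ℂ) (B n (Y n) (t n)))
      = (∏ n, B n (Y n) (s n)) * ∏ n, (starRingEnd ℂ) (B n (Y n) (t n)) from
    Finset.prod_mul_distrib,
    show (PU B) s Y = ∏ n, B n (Y n) (s n) from rfl,
    show (PU B) t Y = ∏ n, B n (Y n) (t n) from rfl, map_prod]
  ring

lemma locProb_nonneg {ρ : Matrix (Fin N → Fin d) (Fin N → Fin d) ℂ}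
    (hρ : ρ.PosSemidef) (B : Fin N → Fin d → Fin d → ℂ) (Y : Fin N → Fin d) :
    0 ≤ locProb ρ B Y := by
  have key : (star (PU B) * ρ * PU B) Y Y
      = dotProduct (star fun s => (PU B) s Y) (ρ *ᵥ fun s => (PU B) s Y) := by
    calc (star (PU B) * ρ * PU B) Y Y
        = ∑ t, ∑ s, star ((PU B) s Y) * ρ s t * (PU B) t Y := by
          rw [Matrix.mul_apply]
          refine Finset.sum_congr rfl fun t _ => ?_
          rw [Matrix.mul_apply, Finset.sum_mul]
          exact Finset.sum_congr rfl fun s _ => by rw [Matrix.star_apply]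
      _ = ∑ s, ∑ t, star ((PU B) s Y) * ρ s t * (PU B) t Y := Finset.sum_comm
      _ = dotProduct (star fun s => (PU B) s Y) (ρ *ᵥ fun s => (PU B) s Y) := by
          rw [dotProduct]
          refine Finset.sum_congr rfl fun s _ => ?_
          rw [Pi.star_apply, Matrix.mulVec, dotProduct, Finset.mul_sum]
          exact Finset.sum_congr rfl fun t _ => by ring
  rw [locProb_eq, key]
  exact (Complex.le_def.mp (hρ.dotProduct_mulVec_nonneg _)).1

lemma locProb_sum {ρ : Matrix (Fin N → Fin d) (Fin N → Fin d) ℂ}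
    (hρ : ρ.trace = 1) {B : Fin N → Fin d → Fin d → ℂ} (hB : ∀ n, ONB (B n)) :
    ∑ Y, locProb ρ B Y = 1 := by
  have : ∑ Y, locProb ρ B Y = (∑ Y, (star (PU B) * ρ * PU B) Y Y).re := by
    rw [Complex.re_sum]
    exact Finset.sum_congr rfl fun Y _ => locProb_eq B Y
  rw [this, show (∑ Y, (star (PU B) * ρ * PU B) Y Y) = (star (PU B) * ρ * PU B).trace from rfl,
    Matrix.trace_mul_cycle, PU_mul_star hB, Matrix.one_mul, hρ]
  rfl

lemma tr_mlog_self {ρ : Matrix n n ℂ} (h : ρ.IsHermitian) :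
    ((ρ * mlog ρ).trace).re = ∑ i, h.eigenvalues i * Real.log (h.eigenvalues i) := by
  have hW1 := Unitary.coe_star_mul_self h.eigenvectorUnitary
  have hW2 := Unitary.coe_mul_star_self h.eigenvectorUnitary
  rw [mlog, dif_pos h, trace_conj_diag hW1 hW2, show star (h.eigenvectorUnitary : Matrix n n ℂ) * ρ * (h.eigenvectorUnitary : Matrix n n ℂ)
    = Matrix.diagonal (RCLike.ofReal ∘ h.eigenvalues) by
      simpa using h.conjStarAlgAut_star_eigenvectorUnitary]
  rw [Complex.re_sum]
  refine Finset.sum_congr rfl fun j _ => ?_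
  rw [Matrix.diagonal_apply_eq]
  show ((((h.eigenvalues j : ℝ) : ℂ)) * ((Real.log (h.eigenvalues j) : ℝ) : ℂ)).re = _
  rw [← Complex.ofReal_mul, Complex.ofReal_re]

lemma relEnt_cc {ρ σ : Matrix (Fin N → Fin d) (Fin N → Fin d) ℂ} (hρ : ρ.IsHermitian)
    {B : Fin N → Fin d → Fin d → ℂ} (hB : ∀ n, ONB (B n)) (q : (Fin N → Fin d) → ℝ)
    (hσ : ∀ s t, σ s t = ∑ Y, (Complex.ofReal (q Y)) *
      (∏ n, B n (Y n) (s n)) * (∏ n, (starRingEnd ℂ) (B n (Y n) (t n)))) :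
    relEnt ρ σ = (∑ i, hρ.eigenvalues i * Real.log (hρ.eigenvalues i))
      - ∑ Y, locProb ρ B Y * Real.log (q Y) := by
  have hU1 := PU_star_mul hB
  have hU2 := PU_mul_star hB
  have hσeq : σ = PU B * Matrix.diagonal (fun Y => ((q Y : ℝ) : ℂ)) * star (PU B) := by
    ext s t
    rw [hσ s t, Matrix.mul_apply]
    refine Finset.sum_congr rfl fun Y _ => ?_
    rw [Matrix.mul_diagonal, Matrix.star_apply,
      show (PU B) s Y = ∏ n, B n (Y n) (s n) from rfl,
      show (PU B) t Y = ∏ n, B n (Y n) (t n) from rfl,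
      show star (∏ n, B n (Y n) (t n)) = (starRingEnd ℂ) (∏ n, B n (Y n) (t n)) from rfl,
      map_prod]
    ring
  have hmlogσ : mlog σ = PU B * Matrix.diagonal (fun Y => ((Real.log (q Y) : ℝ) : ℂ))
      * star (PU B) := by rw [hσeq]; exact mlog_conj hU1 hU2 q
  rw [relEnt, Matrix.mul_sub, Matrix.trace_sub, Complex.sub_re, tr_mlog_self hρ]
  congr 1
  rw [hmlogσ, trace_conj_diag hU1 hU2, Complex.re_sum]
  refine Finset.sum_congr rfl fun Y _ => ?_
  rw [locProb_eq, Complex.mul_re, Complex.ofReal_re, Complex.ofReal_im, mul_zero, sub_zero]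

section scalar
variable {α : Type*} [Fintype α]

lemma shannon_nonneg {p : α → ℝ} (h0 : ∀ y, 0 ≤ p y) (h1 : ∑ y, p y = 1) :
    0 ≤ shannon p := by
  rw [shannon, neg_nonneg]
  refine Finset.sum_nonpos fun y _ => ?_
  rcases eq_or_lt_of_le (h0 y) with h | h
  · rw [← h, zero_mul]
  · have hle : p y ≤ 1 := h1 ▸ Finset.single_le_sum (fun i _ => h0 i) (Finset.mem_univ y)
    exact mul_nonpos_iff.mpr (Or.inl ⟨(h0 y), Real.log_nonpos (h0 y) hle⟩)

lemma gibbs {p q : α → ℝ} (hp0 : ∀ y, 0 ≤ p y) (hp1 : ∑ y, p y = 1)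
    (hq0 : ∀ y, 0 < q y) (hq1 : ∑ y, q y = 1) :
    shannon p ≤ -∑ y, p y * Real.log (q y) := by
  have key : ∑ y, (p y * Real.log (q y) - p y * Real.log (p y)) ≤ 0 := by
    have step : ∀ y ∈ Finset.univ, p y * Real.log (q y) - p y * Real.log (p y)
        ≤ q y - p y := by
      intro y _
      rcases eq_or_lt_of_le (hp0 y) with h | h
      · rw [← h]; simpa using (hq0 y).le
      · have hlog := Real.log_le_sub_one_of_pos (div_pos (hq0 y) h)
        rw [Real.log_div (ne_of_gt (hq0 y)) (ne_of_gt h)] at hlog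
        have h2 := mul_le_mul_of_nonneg_left hlog h.le
        have h3 : p y * (q y / p y - 1) = q y - p y := by field_simp
        rw [h3] at h2
        linarith [h2]
    calc ∑ y, (p y * Real.log (q y) - p y * Real.log (p y)) ≤ ∑ y, (q y - p y) :=
          Finset.sum_le_sum step
      _ = 0 := by rw [Finset.sum_sub_distrib, hp1, hq1, sub_self]
  rw [Finset.sum_sub_distrib] at key
  rw [shannon]
  linarith

lemma crossbound {p : α → ℝ} (hp0 : ∀ y, 0 ≤ p y) {ε c : ℝ} (hε : 0 < 1 - ε) (hc : 0 < c)
    (y : α) :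
    p y * (Real.log (1 - ε) + Real.log (p y)) ≤ p y * Real.log ((1 - ε) * p y + c) := by
  rcases eq_or_lt_of_le (hp0 y) with h | h
  · rw [← h, zero_mul, zero_mul]
  · refine mul_le_mul_of_nonneg_left ?_ h.le
    rw [← Real.log_mul (ne_of_gt hε) (ne_of_gt h)]
    exact Real.log_le_log (by positivity) (by linarith)

end scalar

lemma stdONB (d : ℕ) : ONB (fun a i => if a = i then (1 : ℂ) else 0 : Fin d → Fin d → ℂ) := by
  intro a b
  rw [show (∑ i, (starRingEnd ℂ) (if a = i then (1:ℂ) else 0) * if b = i then (1:ℂ) else 0)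
      = ∑ i, (if a = i then (if b = i then (1:ℂ) else 0) else 0) from
    Finset.sum_congr rfl fun i _ => by by_cases h : a = i <;> simp [h]]
  rw [Finset.sum_ite_eq]
  simp only [Finset.mem_univ, if_true]
  by_cases hab : a = b
  · subst hab; simp
  · rw [if_neg (fun h => hab h.symm), if_neg hab]

def ccState (B : Fin N → Fin d → Fin d → ℂ) (q : (Fin N → Fin d) → ℝ) :
    Matrix (Fin N → Fin d) (Fin N → Fin d) ℂ :=
  Matrix.of fun s t => ∑ Y, (Complex.ofReal (q Y)) *
    (∏ n, B n (Y n) (s n)) * (∏ n, (starRingEnd ℂ) (B n (Y n) (t n)))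

lemma ccState_mem {B : Fin N → Fin d → Fin d → ℂ} (hB : ∀ n, ONB (B n))
    {q : (Fin N → Fin d) → ℝ} (hq0 : ∀ Y, 0 < q Y) (hq1 : ∑ Y, q Y = 1) :
    ClassCorr (ccState B q) :=
  ⟨B, q, hB, hq0, hq1, fun _ _ => rfl⟩


/-- The two expressions for the multipartite work deficit coincide:
`min_{Λ ∈ M_N} H_Λ(Y_N) − S(ρ) = min_{σ ∈ C_N} S(ρ‖σ)`. -/
theorem deficit_eq_min_relEnt {N d : ℕ}
    (ρ : Matrix (Fin N → Fin d) (Fin N → Fin d) ℂ) (hρ : IsDensity ρ) :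
    sInf {h : ℝ | ∃ B : Fin N → Fin d → Fin d → ℂ,
        (∀ n, ONB (B n)) ∧ h = shannon (locProb ρ B)} - vN ρ
      = sInf {x : ℝ | ∃ σ, ClassCorr σ ∧ x = relEnt ρ σ} := by
  obtain ⟨hpsd, htr⟩ := hρ
  have hherm : ρ.IsHermitian := hpsd.1
  set T : ℝ := ∑ i, hherm.eigenvalues i * Real.log (hherm.eigenvalues i) with hT
  have hvN : vN ρ = -T := by rw [vN, dif_pos hherm]
  have hne : Nonempty (Fin N → Fin d) := by
    by_contra h
    rw [not_nonempty_iff] at h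
    have h0 : ρ.trace = 0 := by
      rw [Matrix.trace, Finset.univ_eq_empty, Finset.sum_empty]
    rw [h0] at htr
    exact zero_ne_one htr
  set S1 := {h : ℝ | ∃ B : Fin N → Fin d → Fin d → ℂ,
      (∀ n, ONB (B n)) ∧ h = shannon (locProb ρ B)} with hS1def
  set S2 := {x : ℝ | ∃ σ, ClassCorr σ ∧ x = relEnt ρ σ} with hS2def
  have hS1mem : ∀ (B : Fin N → Fin d → Fin d → ℂ), (∀ n, ONB (B n)) →
      shannon (locProb ρ B) ∈ S1 := fun B hB => ⟨B, hB, rfl⟩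
  have hB0 : ∀ n : Fin N,
      ONB ((fun _ : Fin N => (fun a i => if a = i then (1:ℂ) else 0 : Fin d → Fin d → ℂ)) n) :=
    fun _ => stdONB d
  have hS1ne : S1.Nonempty := ⟨_, hS1mem _ hB0⟩
  have hS1bdd : BddBelow S1 := ⟨0, fun x hx => by
    obtain ⟨B, hB, rfl⟩ := hx
    exact shannon_nonneg (locProb_nonneg hpsd B) (locProb_sum htr hB)⟩
  have hS2elem : ∀ x ∈ S2, ∃ (B : Fin N → Fin d → Fin d → ℂ) (q : (Fin N → Fin d) → ℝ),
      (∀ n, ONB (B n)) ∧ (∀ Y, 0 < q Y) ∧ (∑ Y, q Y = 1) ∧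
      x = T - ∑ Y, locProb ρ B Y * Real.log (q Y) := by
    rintro x ⟨σ, ⟨B, q, hB, hq0, hq1, hσ⟩, rfl⟩
    exact ⟨B, q, hB, hq0, hq1, relEnt_cc hherm hB q hσ⟩
  have bound1 : ∀ x ∈ S2, sInf S1 - vN ρ ≤ x := by
    intro x hx
    obtain ⟨B, q, hB, hq0, hq1, rfl⟩ := hS2elem x hx
    have h1 : sInf S1 ≤ shannon (locProb ρ B) := csInf_le hS1bdd (hS1mem B hB)
    have h2 : shannon (locProb ρ B) ≤ -∑ Y, locProb ρ B Y * Real.log (q Y) :=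
      gibbs (locProb_nonneg hpsd B) (locProb_sum htr hB) hq0 hq1
    rw [hvN]
    linarith
  set k : ℝ := (Fintype.card (Fin N → Fin d) : ℝ) with hk'
  have hk : 0 < k := by
    rw [hk']
    exact_mod_cast Fintype.card_pos
  have hS2ne : S2.Nonempty := by
    have hq1 : ∑ _Y : Fin N → Fin d, 1/k = 1 := by
      rw [Finset.sum_const, Finset.card_univ, nsmul_eq_mul, mul_one_div, div_self hk.ne']
    exact ⟨_, ⟨ccState _ (fun _ => 1/k),
      ccState_mem hB0 (fun _ => by positivity) hq1, rfl⟩⟩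
  have hS2bdd : BddBelow S2 := ⟨sInf S1 - vN ρ, bound1⟩
  have key : ∀ (B : Fin N → Fin d → Fin d → ℂ), (∀ n, ONB (B n)) →
      sInf S2 ≤ shannon (locProb ρ B) - vN ρ := by
    intro B hB
    by_contra hcon
    push_neg at hcon
    set P := locProb ρ B with hP
    set δ := (sInf S2 - (shannon P - vN ρ)) / 2 with hδ
    have hδpos : 0 < δ := by rw [hδ]; linarith
    have hP0 := locProb_nonneg hpsd B
    have hP1 := locProb_sum htr hB
    set ε := 1 - Real.exp (-δ) with hε
    have h1e : 1 - ε = Real.exp (-δ) := by rw [hε]; ring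
    have h1ε : 0 < 1 - ε := by rw [h1e]; exact Real.exp_pos _
    have hεpos : 0 < ε := by
      rw [hε, sub_pos, ← Real.exp_zero]
      exact Real.exp_lt_exp.mpr (by linarith)
    set q := fun Y => (1 - ε) * P Y + ε / k with hq
    have hq0 : ∀ Y, 0 < q Y := fun Y =>
      add_pos_of_nonneg_of_pos (mul_nonneg h1ε.le (hP0 Y)) (div_pos hεpos hk)
    have hq1 : ∑ Y, q Y = 1 := by
      simp only [hq]
      rw [Finset.sum_add_distrib, ← Finset.mul_sum, hP1, mul_one, Finset.sum_const,
        Finset.card_univ, nsmul_eq_mul, ← hk', mul_div_cancel₀ _ hk.ne']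
      ring
    have hmem : (T - ∑ Y, P Y * Real.log (q Y)) ∈ S2 :=
      ⟨ccState B q, ccState_mem hB hq0 hq1,
        (relEnt_cc hherm hB q (fun _ _ => rfl)).symm ▸ rfl⟩
    have hlogε : Real.log (1 - ε) = -δ := by rw [h1e, Real.log_exp]
    have hterm : ∀ Y ∈ Finset.univ, P Y * (Real.log (1-ε) + Real.log (P Y))
        ≤ P Y * Real.log (q Y) := by
      intro Y _
      have := crossbound hP0 h1ε (div_pos hεpos hk) Y
      simpa only [hq] using this
    have hsum := Finset.sum_le_sum hterm
    have hexpand : ∑ Y, P Y * (Real.log (1-ε) + Real.log (P Y)) = -δ - shannon P := by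
      simp only [mul_add]
      rw [Finset.sum_add_distrib, ← Finset.sum_mul, hP1, one_mul, hlogε, shannon]
      ring
    rw [hexpand] at hsum
    have hbound : T - ∑ Y, P Y * Real.log (q Y) ≤ T + shannon P + δ := by linarith
    have hfin := csInf_le hS2bdd hmem
    rw [hvN] at hcon hδ
    linarith
  refine le_antisymm (le_csInf hS2ne bound1) ?_
  have h2 : ∀ h ∈ S1, sInf S2 + vN ρ ≤ h := by
    rintro h ⟨B, hB, rfl⟩
    linarith [key B hB]
  have := le_csInf hS1ne h2
  linarith
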